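/- For all reals α > 2, θ > 0 and b > 0, with δ := 2/α, the improper integral ∫₀^∞ (1 − (1 + θ v^{−α})^{−b}) · 2v dv converges and equals θ^{δ} · Γ(1−δ) · Γ(b+δ) / Γ(b), where Γ is the real Gamma function. -/

import Mathlib

open MeasureTheory Real Set Filter Topology

lemma beta01 {p q : ℝ} (hp : 0 < p) (hq : 0 < q) :
    IntegrableOn (fun x : ℝ => x ^ (p-1) * (1-x) ^ (q-1)) (Ioo 0 1) volume ∧
    ∫ x in Ioo (0:ℝ) 1, x ^ (p-1) * (1-x) ^ (q-1)
      = Gamma p * Gamma q / Gamma (p+q) := by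
  have hconv := Complex.betaIntegral_convergent (u := (p:ℂ)) (v := (q:ℂ)) (by simpa) (by simpa)
  have hnorm : ∀ x ∈ Ioo (0:ℝ) 1,
      ‖(x:ℂ) ^ ((p:ℂ)-1) * (1-(x:ℂ)) ^ ((q:ℂ)-1)‖ = x ^ (p-1) * (1-x) ^ (q-1) := by
    intro x hx
    rw [norm_mul,
      Complex.norm_cpow_eq_rpow_re_of_pos (by exact_mod_cast hx.1),
      show (1:ℂ) - (x:ℂ) = ((1-x:ℝ):ℂ) by push_cast; ring,
      Complex.norm_cpow_eq_rpow_re_of_pos (by linarith [hx.2])]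
    norm_num
  have hint : IntegrableOn (fun x : ℝ => x ^ (p-1) * (1-x) ^ (q-1)) (Ioo 0 1) volume := by
    have h1 : IntegrableOn (fun x : ℝ =>
        ‖(x:ℂ) ^ ((p:ℂ)-1) * (1-(x:ℂ)) ^ ((q:ℂ)-1)‖) (Ioo 0 1) volume := by
      have := hconv.norm
      rw [intervalIntegrable_iff_integrableOn_Ioo_of_le (by norm_num)] at this
      exact this
    exact h1.congr_fun hnorm measurableSet_Ioo
  refine ⟨hint, ?_⟩
  have hcong : (∫ x in (0:ℝ)..1, (x:ℂ) ^ ((p:ℂ)-1) * (1-(x:ℂ)) ^ ((q:ℂ)-1))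
      = ∫ x in (0:ℝ)..1, ((x ^ (p-1) * (1-x) ^ (q-1) : ℝ) : ℂ) := by
    apply intervalIntegral.integral_congr
    intro x hx
    rw [uIcc_of_le (by norm_num)] at hx
    simp only []
    rw [Complex.ofReal_mul, Complex.ofReal_cpow hx.1, Complex.ofReal_cpow (by linarith [hx.2])]
    push_cast
    ring_nf
  have hval : Complex.betaIntegral p q
      = ((∫ x in Ioo (0:ℝ) 1, x ^ (p-1) * (1-x) ^ (q-1) : ℝ) : ℂ) := by
    rw [Complex.betaIntegral, hcong, intervalIntegral.integral_ofReal,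
      intervalIntegral.integral_of_le (by norm_num), integral_Ioc_eq_integral_Ioo]
  have hg : Complex.betaIntegral p q
      = ((Gamma p * Gamma q / Gamma (p+q) : ℝ) : ℂ) := by
    have h := Complex.Gamma_mul_Gamma_eq_betaIntegral (s := (p:ℂ)) (t := (q:ℂ))
      (by simpa) (by simpa)
    have hG : Complex.Gamma ((p:ℂ)+(q:ℂ)) ≠ 0 :=
      Complex.Gamma_ne_zero_of_re_pos (by simp; positivity)
    rw [Complex.ofReal_div, Complex.ofReal_mul, ← Complex.Gamma_ofReal,
      ← Complex.Gamma_ofReal, ← Complex.Gamma_ofReal, Complex.ofReal_add, eq_div_iff hG]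
    linear_combination -h
  exact_mod_cast hval.symm.trans hg

lemma betaIoi {p q : ℝ} (hp : 0 < p) (hq : 0 < q) :
    IntegrableOn (fun u : ℝ => u ^ (p-1) * (1+u) ^ (-(p+q))) (Ioi 0) volume ∧
    ∫ u in Ioi (0:ℝ), u ^ (p-1) * (1+u) ^ (-(p+q))
      = Gamma p * Gamma q / Gamma (p+q) := by
  set g : ℝ → ℝ := fun u => u ^ (p-1) * (1+u) ^ (-(p+q)) with hg
  set f : ℝ → ℝ := fun x => x / (1-x) with hf
  set f' : ℝ → ℝ := fun x => ((1-x) ^ 2)⁻¹ with hf'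
  have hderiv : ∀ x ∈ Ioo (0:ℝ) 1, HasDerivWithinAt f (f' x) (Ioo 0 1) x := by
    intro x hx
    have hc : (1:ℝ) - x ≠ 0 := by have := hx.2; intro h; nlinarith [hx.2]
    have : HasDerivAt f ((1 * (1-x) - x * (0 - 1)) / (1-x)^2) x :=
      (hasDerivAt_id x).div ((hasDerivAt_const x 1).sub (hasDerivAt_id x)) hc
    have h2 : (1 * (1-x) - x * (0 - 1)) / (1-x)^2 = f' x := by
      rw [hf']
      field_simp
      ring
    exact (h2 ▸ this).hasDerivWithinAt
  have hinj : InjOn f (Ioo 0 1) := by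
    intro x hx y hy hxy
    have h1 : (1:ℝ) - x ≠ 0 := by intro h; nlinarith [hx.2]
    have h2 : (1:ℝ) - y ≠ 0 := by intro h; nlinarith [hy.2]
    simp only [hf] at hxy
    field_simp at hxy
    nlinarith [hxy]
  have himg : f '' Ioo 0 1 = Ioi (0:ℝ) := by
    ext u
    constructor
    · rintro ⟨x, hx, rfl⟩
      have h1 : (0:ℝ) < 1 - x := by linarith [hx.2]
      exact div_pos hx.1 h1
    · intro hu
      have hu' : (0:ℝ) < u := hu
      refine ⟨u / (1+u), ⟨by positivity, ?_⟩, ?_⟩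
      · rw [div_lt_one (by positivity)]; linarith
      · have h1 : (1:ℝ) + u ≠ 0 := by positivity
        simp only [hf]
        field_simp
        ring
  have hpt : ∀ x ∈ Ioo (0:ℝ) 1, |f' x| • g (f x) = x ^ (p-1) * (1-x) ^ (q-1) := by
    intro x hx
    have hx0 : (0:ℝ) < x := hx.1
    have hc : (0:ℝ) < 1 - x := by linarith [hx.2]
    have h1 : (1:ℝ) + x / (1-x) = (1-x)⁻¹ := by field_simp; ring
    have h2 : f x = x * (1-x)⁻¹ := by rw [hf]; ring
    rw [smul_eq_mul, hg, hf', abs_of_pos (by positivity), h2]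
    simp only []
    rw [show (1:ℝ) + x * (1-x)⁻¹ = (1-x)⁻¹ by field_simp; ring]
    rw [Real.mul_rpow hx0.le (by positivity), Real.inv_rpow hc.le,
      Real.inv_rpow hc.le, Real.rpow_neg hc.le, inv_inv]
    rw [show ((1-x)^2)⁻¹ = ((1-x)^(2:ℕ))⁻¹ from rfl, ← Real.rpow_natCast (1-x) 2,
      ← Real.rpow_neg hc.le]
    rw [← Real.rpow_neg hc.le (p-1)]
    have e : (1-x) ^ (-((2:ℕ):ℝ)) * ((1-x) ^ (-(p-1)) * (1-x) ^ (p+q)) = (1-x) ^ (q-1) := by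
      rw [← Real.rpow_add hc, ← Real.rpow_add hc]
      congr 1
      push_cast
      ring
    rw [← e]
    ring
  have key := integral_image_eq_integral_abs_deriv_smul measurableSet_Ioo hderiv hinj g
  have keyi := integrableOn_image_iff_integrableOn_abs_deriv_smul measurableSet_Ioo hderiv hinj g
  rw [himg] at key keyi
  obtain ⟨hi01, hv01⟩ := beta01 hp hq
  constructor
  · rw [keyi]
    exact hi01.congr_fun (fun x hx => (hpt x hx).symm) measurableSet_Ioo |>.congr_fun
      (fun x hx => rfl) measurableSet_Ioo
  · rw [key, setIntegral_congr_fun measurableSet_Ioo hpt, hv01]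

lemma bern {b u : ℝ} (hb : 0 ≤ b) (hu : 0 ≤ u) : 1 - (1+u) ^ (-b) ≤ b * u := by
  have h1 : (0:ℝ) < 1 + u := by linarith
  rw [Real.rpow_def_of_pos h1]
  have h2 : Real.log (1+u) ≤ u := by
    have := Real.log_le_sub_one_of_pos h1; linarith
  have h3 := Real.add_one_le_exp (Real.log (1+u) * (-b))
  nlinarith [mul_le_mul_of_nonneg_left h2 hb, Real.log_nonneg (by linarith : (1:ℝ) ≤ 1+u)]

lemma onesub_mem {b u : ℝ} (hb : 0 ≤ b) (hu : 0 ≤ u) :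
    0 ≤ 1 - (1+u) ^ (-b) ∧ 1 - (1+u) ^ (-b) ≤ 1 := by
  have h1 : (1+u) ^ (-b) ≤ 1 :=
    Real.rpow_le_one_of_one_le_of_nonpos (by linarith) (by linarith)
  have h2 : (0:ℝ) ≤ (1+u) ^ (-b) := Real.rpow_nonneg (by linarith) _
  exact ⟨by linarith, by linarith⟩

lemma Fint {δ b : ℝ} (h0 : 0 < δ) (h1 : δ < 1) (hb : 0 < b) :
    IntegrableOn (fun u : ℝ => (1 - (1+u) ^ (-b)) * u ^ (-δ-1)) (Ioi 0) volume := by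
  have hmeas : Measurable (fun u : ℝ => (1 - (1+u) ^ (-b)) * u ^ (-δ-1)) := by
    fun_prop
  rw [← Ioc_union_Ioi_eq_Ioi (zero_le_one' ℝ)]
  apply IntegrableOn.union
  · have hg : IntegrableOn (fun u : ℝ => b * u ^ (-δ)) (Ioc 0 1) volume := by
      apply Integrable.const_mul
      exact (intervalIntegrable_iff_integrableOn_Ioc_of_le zero_le_one).mp
        (intervalIntegral.intervalIntegrable_rpow' (by linarith))
    apply hg.mono' hmeas.aestronglyMeasurable
    rw [ae_restrict_iff' measurableSet_Ioc]
    filter_upwards with u hu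
    have hu0 : (0:ℝ) < u := hu.1
    have hp : (0:ℝ) ≤ u ^ (-δ-1) := Real.rpow_nonneg hu0.le _
    have hnn := (onesub_mem hb.le hu0.le).1
    rw [Real.norm_eq_abs, abs_of_nonneg (mul_nonneg hnn hp)]
    have key : b * u ^ (-δ) = (b * u) * u ^ (-δ-1) := by
      rw [show -δ = 1 + (-δ-1) by ring, Real.rpow_add hu0, Real.rpow_one]; ring
    rw [key]
    exact mul_le_mul_of_nonneg_right (bern hb.le hu0.le) hp
  · have hg : IntegrableOn (fun u : ℝ => u ^ (-δ-1)) (Ioi 1) volume :=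
      integrableOn_Ioi_rpow_of_lt (by linarith) one_pos
    apply hg.mono' hmeas.aestronglyMeasurable
    rw [ae_restrict_iff' measurableSet_Ioi]
    filter_upwards with u hu
    have hu0 : (0:ℝ) < u := lt_trans one_pos hu
    have hp : (0:ℝ) ≤ u ^ (-δ-1) := Real.rpow_nonneg hu0.le _
    have h2 := onesub_mem hb.le hu0.le
    rw [Real.norm_eq_abs, abs_of_nonneg (mul_nonneg h2.1 hp)]
    nlinarith [h2.1, h2.2]

lemma Jval {δ b : ℝ} (h0 : 0 < δ) (h1 : δ < 1) (hb : 0 < b) :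
    ∫ u in Ioi (0:ℝ), (1 - (1+u) ^ (-b)) * u ^ (-δ-1)
      = (b/δ) * (Gamma (1-δ) * Gamma (b+δ) / Gamma (b+1)) := by
  obtain ⟨hKint, hKval⟩ := betaIoi (p := 1-δ) (q := b+δ) (by linarith) (by linarith)
  have hFint := Fint h0 h1 hb
  set F : ℝ → ℝ := fun u => (1 - (1+u) ^ (-b)) * u ^ (-δ-1) with hF
  set K : ℝ → ℝ := fun u => u ^ ((1-δ)-1) * (1+u) ^ (-((1-δ)+(b+δ))) with hK
  set G : ℝ → ℝ := fun u => -((1 - (1+u) ^ (-b)) * u ^ (-δ)) / δ with hG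
  have hKeq : ∀ u : ℝ, K u = u ^ (-δ) * (1+u) ^ (-b-1) := by
    intro u
    rw [hK]
    simp only []
    rw [show (1-δ)-1 = -δ by ring, show -((1-δ)+(b+δ)) = -b-1 by ring]
  have hHint : IntegrableOn (fun u => F u - (b/δ) * K u) (Ioi 0) volume :=
    hFint.sub (hKint.const_mul _)
  have hderiv : ∀ u : ℝ, 0 < u → HasDerivAt G (F u - (b/δ) * K u) u := by
    intro u hu
    have h1u : (0:ℝ) < 1 + u := by linarith
    have d0 : HasDerivAt (fun u : ℝ => 1 + u) 1 u := by
      simpa using (hasDerivAt_id u).const_add 1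
    have d1 := d0.rpow_const (p := -b) (Or.inl h1u.ne')
    have d2 : HasDerivAt (fun u : ℝ => u ^ (-δ)) ((-δ) * u ^ (-δ-1)) u :=
      Real.hasDerivAt_rpow_const (Or.inl hu.ne')
    have d3 := (hasDerivAt_const u (1:ℝ)).sub d1
    have d4 := ((d3.mul d2).neg).div_const δ
    refine d4.congr_deriv ?_
    symm
    rw [hF, hKeq u]
    simp only []
    rw [show (-b) - 1 = -b-1 from rfl]
    field_simp
    simp only [Pi.sub_apply]
    ring
  have htop : Tendsto G atTop (𝓝 0) := by
    apply squeeze_zero_norm' (a := fun u : ℝ => δ⁻¹ * u ^ (-δ))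
    · filter_upwards [Filter.eventually_gt_atTop (0:ℝ)] with u hu
      have hm := onesub_mem hb.le hu.le
      have hp : (0:ℝ) ≤ u ^ (-δ) := Real.rpow_nonneg hu.le _
      rw [hG]
      simp only []
      rw [Real.norm_eq_abs, abs_div, abs_of_pos h0, abs_neg,
        abs_of_nonneg (mul_nonneg hm.1 hp), div_eq_inv_mul]
      apply mul_le_mul_of_nonneg_left _ (by positivity)
      nlinarith [hm.1, hm.2]
    · have := (tendsto_rpow_neg_atTop h0).const_mul δ⁻¹
      simpa using this
  have hzero : Tendsto G (𝓝[>] (0:ℝ)) (𝓝 0) := by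
    apply squeeze_zero_norm' (a := fun u : ℝ => (b/δ) * u ^ (1-δ))
    · filter_upwards [self_mem_nhdsWithin] with u hu
      have hu0 : (0:ℝ) < u := hu
      have hm := onesub_mem hb.le hu0.le
      have hp : (0:ℝ) ≤ u ^ (-δ) := Real.rpow_nonneg hu0.le _
      rw [hG]
      simp only []
      rw [Real.norm_eq_abs, abs_div, abs_of_pos h0, abs_neg,
        abs_of_nonneg (mul_nonneg hm.1 hp)]
      have key : (b/δ) * u ^ (1-δ) = ((b*u) * u ^ (-δ)) / δ := by
        rw [show (1:ℝ)-δ = 1 + (-δ) by ring, Real.rpow_add hu0, Real.rpow_one]; ring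
      rw [key]
      gcongr
      exact bern hb.le hu0.le
    · have c1 : ContinuousAt (fun x : ℝ => x ^ (1-δ)) 0 :=
        Real.continuousAt_rpow_const 0 (1-δ) (Or.inr (by linarith))
      have c2 : Tendsto (fun x : ℝ => x ^ (1-δ)) (𝓝[>] (0:ℝ)) (𝓝 0) := by
        have := c1.tendsto.mono_left (nhdsWithin_le_nhds (s := Ioi (0:ℝ)))
        rwa [Real.zero_rpow (by linarith : (1:ℝ)-δ ≠ 0)] at this
      have := c2.const_mul (b/δ)
      simpa using this
  have hstep : ∀ ε : ℝ, 0 < ε → ∫ u in Ioi ε, (F u - (b/δ) * K u) = 0 - G ε := by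
    intro ε hε
    refine integral_Ioi_of_hasDerivAt_of_tendsto'
      (fun x hx => hderiv x (lt_of_lt_of_le hε hx)) (hHint.mono_set (Ioi_subset_Ioi hε.le)) htop
  have hseq : Tendsto (fun n : ℕ => ∫ u in Ioi (((n:ℝ)+1)⁻¹), (F u - (b/δ) * K u)) atTop
      (𝓝 (∫ u in Ioi (0:ℝ), (F u - (b/δ) * K u))) := by
    have hU : (⋃ n : ℕ, Ioi (((n:ℝ)+1)⁻¹)) = Ioi (0:ℝ) := by
      ext x
      simp only [mem_iUnion, mem_Ioi]
      constructor
      · rintro ⟨n, hn⟩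
        exact lt_trans (by positivity) hn
      · intro hx
        obtain ⟨n, hn⟩ := exists_nat_one_div_lt hx
        exact ⟨n, by rwa [one_div] at hn⟩
    have := tendsto_setIntegral_of_monotone (f := fun u => F u - (b/δ) * K u)
      (fun n : ℕ => measurableSet_Ioi)
      (fun m n hmn => Ioi_subset_Ioi (by
        apply inv_anti₀ (by positivity)
        have : (m:ℝ) ≤ n := Nat.cast_le.mpr hmn
        linarith)) (hU ▸ hHint)
    rwa [hU] at this
  have hseq2 : Tendsto (fun n : ℕ => ∫ u in Ioi (((n:ℝ)+1)⁻¹), (F u - (b/δ) * K u)) atTop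
      (𝓝 0) := by
    have heq : (fun n : ℕ => ∫ u in Ioi (((n:ℝ)+1)⁻¹), (F u - (b/δ) * K u))
        = fun n : ℕ => 0 - G (((n:ℝ)+1)⁻¹) := by
      funext n
      exact hstep _ (by positivity)
    rw [heq]
    have hG0 : Tendsto (fun n : ℕ => G (((n:ℝ)+1)⁻¹)) atTop (𝓝 0) := by
      apply hzero.comp
      rw [tendsto_nhdsWithin_iff]
      constructor
      · have := tendsto_one_div_add_atTop_nhds_zero_nat (𝕜 := ℝ)
        simpa [one_div] using this
      · filter_upwards with n
        exact mem_Ioi.mpr (by positivity)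
    simpa using (tendsto_const_nhds (x := (0:ℝ))).sub hG0
  have hH0 : ∫ u in Ioi (0:ℝ), (F u - (b/δ) * K u) = 0 := tendsto_nhds_unique hseq hseq2
  rw [integral_sub hFint (hKint.const_mul _), integral_const_mul, sub_eq_zero] at hH0
  rw [hH0, hKval, show 1-δ+(b+δ) = b+1 by ring]

theorem stmt12 (α θ b : ℝ) (hα : 2 < α) (hθ : 0 < θ) (hb : 0 < b) :
    IntegrableOn (fun v : ℝ => (1 - (1 + θ * v ^ (-α)) ^ (-b)) * (2 * v)) (Set.Ioi 0) volume ∧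
    ∫ v in Set.Ioi (0 : ℝ), (1 - (1 + θ * v ^ (-α)) ^ (-b)) * (2 * v)
      = θ ^ (2 / α) * Real.Gamma (1 - 2 / α) * Real.Gamma (b + 2 / α) / Real.Gamma b := by
  have hα0 : (0:ℝ) < α := by linarith
  set δ : ℝ := 2 / α with hδ
  have hδ0 : 0 < δ := by positivity
  have hδ1 : δ < 1 := by rw [hδ, div_lt_one hα0]; linarith
  have hαδ : α * δ = 2 := by rw [hδ]; field_simp
  set F : ℝ → ℝ := fun u => (δ * θ ^ δ) * ((1 - (1+u) ^ (-b)) * u ^ (-δ-1)) with hF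
  set f : ℝ → ℝ := fun v => θ * v ^ (-α) with hf
  set f' : ℝ → ℝ := fun v => θ * ((-α) * v ^ (-α-1)) with hf'
  have hderiv : ∀ v ∈ Ioi (0:ℝ), HasDerivAt f (f' v) v := by
    intro v hv
    exact (Real.hasDerivAt_rpow_const (Or.inl (ne_of_gt hv))).const_mul θ
  have hderiv' : ∀ v ∈ Ioi (0:ℝ), HasDerivWithinAt f (f' v) (Ioi 0) v :=
    fun v hv => (hderiv v hv).hasDerivWithinAt
  have hinj : InjOn f (Ioi 0) := by
    intro x hx y hy hxy
    have hx0 : (0:ℝ) < x := hx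
    have hy0 : (0:ℝ) < y := hy
    have h2 : x ^ (-α) = y ^ (-α) := by
      simp only [hf, mul_eq_mul_left_iff] at hxy
      rcases hxy with h | h
      · exact h
      · exact absurd h hθ.ne'
    have h3 : (x ^ (-α)) ^ ((-α)⁻¹) = (y ^ (-α)) ^ ((-α)⁻¹) := by rw [h2]
    rwa [← Real.rpow_mul hx0.le, ← Real.rpow_mul hy0.le,
      mul_inv_cancel₀ (by simp [hα0.ne'] : (-α) ≠ 0), Real.rpow_one, Real.rpow_one] at h3
  have himg : f '' Ioi 0 = Ioi (0:ℝ) := by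
    ext u
    constructor
    · rintro ⟨v, hv, rfl⟩
      have hv0 : (0:ℝ) < v := hv
      have : (0:ℝ) < v ^ (-α) := Real.rpow_pos_of_pos hv0 _
      exact mul_pos hθ this
    · intro hu
      have hu0 : (0:ℝ) < u := hu
      refine ⟨(u/θ) ^ ((-α)⁻¹), Real.rpow_pos_of_pos (by positivity) _, ?_⟩
      rw [hf]
      simp only []
      rw [← Real.rpow_mul (by positivity), inv_mul_cancel₀ (by simp [hα0.ne'] : (-α) ≠ 0),
        Real.rpow_one]
      field_simp
  have hpt : ∀ v ∈ Ioi (0:ℝ), |f' v| • F (f v) = (1 - (1 + θ * v ^ (-α)) ^ (-b)) * (2 * v) := by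
    intro v hv
    have hv0 : (0:ℝ) < v := hv
    have hvα : (0:ℝ) < v ^ (-α) := Real.rpow_pos_of_pos hv0 _
    have habs : |f' v| = θ * α * v ^ (-α-1) := by
      rw [hf']
      simp only []
      rw [abs_mul, abs_mul, abs_of_pos hθ, abs_neg, abs_of_pos hα0,
        abs_of_pos (Real.rpow_pos_of_pos hv0 _)]
      ring
    rw [smul_eq_mul, habs, hF, hf]
    simp only []
    have hexp : (θ * v ^ (-α)) ^ (-δ-1) = θ ^ (-δ-1) * v ^ ((-α) * (-δ-1)) := by
      rw [Real.mul_rpow hθ.le hvα.le, ← Real.rpow_mul hv0.le]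
    rw [hexp]
    have hθpow : θ * θ ^ δ * θ ^ (-δ-1) = 1 := by
      rw [mul_assoc, ← Real.rpow_add hθ, show δ + (-δ-1) = -1 by ring, Real.rpow_neg_one,
        mul_inv_cancel₀ hθ.ne']
    have hvpow : v ^ (-α-1) * v ^ ((-α) * (-δ-1)) = v := by
      rw [← Real.rpow_add hv0, show -α-1 + (-α)*(-δ-1) = α*δ - 1 by ring, hαδ,
        show (2:ℝ)-1 = 1 by norm_num, Real.rpow_one]
    calc θ * α * v ^ (-α-1) * (δ * θ ^ δ *
          ((1 - (1 + θ * v ^ (-α)) ^ (-b)) * (θ ^ (-δ-1) * v ^ ((-α) * (-δ-1)))))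
        = (1 - (1 + θ * v ^ (-α)) ^ (-b)) * ((α * δ) *
            ((θ * θ ^ δ * θ ^ (-δ-1)) * (v ^ (-α-1) * v ^ ((-α) * (-δ-1))))) := by ring
      _ = (1 - (1 + θ * v ^ (-α)) ^ (-b)) * (2 * v) := by
          rw [hθpow, hvpow, hαδ]; ring
  have hFint : IntegrableOn F (Ioi 0) volume := (Fint hδ0 hδ1 hb).const_mul _
  have key := integral_image_eq_integral_abs_deriv_smul measurableSet_Ioi hderiv' hinj F
  have keyi := integrableOn_image_iff_integrableOn_abs_deriv_smul measurableSet_Ioi hderiv' hinj F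
  rw [himg] at key keyi
  constructor
  · exact (keyi.mp hFint).congr_fun hpt measurableSet_Ioi
  · have horig : ∫ v in Ioi (0:ℝ), (1 - (1 + θ * v ^ (-α)) ^ (-b)) * (2 * v)
        = ∫ u in Ioi (0:ℝ), F u := by
      rw [key, ← setIntegral_congr_fun measurableSet_Ioi hpt]
    rw [horig, hF, integral_const_mul, Jval hδ0 hδ1 hb, Real.Gamma_add_one hb.ne']
    have hΓb : Real.Gamma b ≠ 0 := (Real.Gamma_pos_of_pos hb).ne'
    field_simp
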